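/- Let F be a field, t ∈ F, K a field extension of F, and α ∈ K a root of g(x;t) = x³ + t·x² − (t+3)·x + 1. Then α ≠ 0, α ≠ 1, and in K[x] one has the factorization g(x;t) = (x − α)·(x − 1/(1−α))·(x − (1 − 1/α)); in particular 1/(1−α) and 1 − 1/α are also roots of g(x;t). -/

import Mathlib

open Polynomial

theorem stmt_3 (F K : Type*) [Field F] [Field K] [Algebra F K] (t : F) (α : K)
    (hα : α ^ 3 + algebraMap F K t * α ^ 2 - (algebraMap F K t + 3) * α + 1 = 0) :
    α ≠ 0 ∧ α ≠ 1 ∧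
    (X ^ 3 + C (algebraMap F K t) * X ^ 2 - C (algebraMap F K t + 3) * X + 1 : K[X])
      = (X - C α) * (X - C (1 / (1 - α))) * (X - C (1 - 1 / α)) ∧
    (1 / (1 - α)) ^ 3 + algebraMap F K t * (1 / (1 - α)) ^ 2
      - (algebraMap F K t + 3) * (1 / (1 - α)) + 1 = 0 ∧
    (1 - 1 / α) ^ 3 + algebraMap F K t * (1 - 1 / α) ^ 2
      - (algebraMap F K t + 3) * (1 - 1 / α) + 1 = 0 := by
  set s := algebraMap F K t with hs
  have h0 : α ≠ 0 := by
    rintro rfl; simp at hα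
  have h1 : α ≠ 1 := by
    rintro rfl
    have : (-1 : K) = 0 := by linear_combination hα
    norm_num at this
  have h1' : (1 : K) - α ≠ 0 := sub_ne_zero.mpr h1.symm
  have e1 : α + 1/(1-α) + (1 - 1/α) = -s := by
    field_simp
    linear_combination (-1 : K) * hα
  have e2 : α * (1/(1-α)) + α * (1 - 1/α) + (1/(1-α)) * (1 - 1/α) = -(s+3) := by
    field_simp
    linear_combination (-1 : K) * hα
  have e3 : α * (1/(1-α)) * (1 - 1/α) = -1 := by
    field_simp
    ring
  refine ⟨h0, h1, ?_, ?_, ?_⟩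
  · have E1 : C α + C (1/(1-α)) + C (1 - 1/α) = -C s := by
      rw [← map_add, ← map_add, e1, map_neg]
    have E2 : C α * C (1/(1-α)) + C α * C (1 - 1/α) + C (1/(1-α)) * C (1 - 1/α)
        = -C (s + 3) := by
      rw [← map_mul, ← map_mul, ← map_mul, ← map_add, ← map_add, e2, map_neg]
    have E3 : C α * C (1/(1-α)) * C (1 - 1/α) = -1 := by
      rw [← map_mul, ← map_mul, e3, map_neg, map_one]
    linear_combination (X^2 : K[X]) * E1 - (X : K[X]) * E2 + E3
  · field_simp
    linear_combination (-1 : K) * hα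
  · field_simp
    linear_combination (-1 : K) * hα
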